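/- Every proper subclass of Av(231) is splittable over the class L of layered permutations; that is, for every proper subclass C ⊊ Av(231) there exist finitely many subclasses of L whose merge contains C. -/

import Mathlib

/-- A permutation of some finite length `n`, as a bijection of `Fin n`. -/
abbrev PPerm : Type := Σ n : ℕ, Equiv.Perm (Fin n)

/-- `Contains π σ` : the pattern `σ` occurs in (is contained in) `π`. -/
def Contains (π σ : PPerm) : Prop :=
  ∃ f : Fin σ.1 → Fin π.1, StrictMono f ∧
    ∀ i j, σ.2 i < σ.2 j ↔ π.2 (f i) < π.2 (f j)

/-- A permutation class: a set of permutations closed downwards under containment. -/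
def IsPermClass (C : Set PPerm) : Prop :=
  ∀ π ∈ C, ∀ σ : PPerm, Contains π σ → σ ∈ C

/-- `σ` is (exactly) the pattern of the set `S` of points of `π`. -/
def PatternOf (π : PPerm) (S : Set (Fin π.1)) (σ : PPerm) : Prop :=
  ∃ f : Fin σ.1 → Fin π.1, StrictMono f ∧ Set.range f = S ∧
    ∀ i j, σ.2 i < σ.2 j ↔ π.2 (f i) < π.2 (f j)

/-- The points of `π` lying in `S` contain an occurrence of `σ`. -/
def ContainsIn (π : PPerm) (S : Set (Fin π.1)) (σ : PPerm) : Prop :=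
  ∃ f : Fin σ.1 → Fin π.1, StrictMono f ∧ (∀ i, f i ∈ S) ∧
    ∀ i j, σ.2 i < σ.2 j ↔ π.2 (f i) < π.2 (f j)

/-- `π` is a merge of `σ` and `τ`: its points split into a part with pattern `σ`
and a part with pattern `τ`. -/
def IsMerge (π σ τ : PPerm) : Prop :=
  ∃ S : Set (Fin π.1), PatternOf π S σ ∧ PatternOf π Sᶜ τ

/-- Merge of two classes. -/
def MergeCl (C D : Set PPerm) : Set PPerm :=
  {π | ∃ σ ∈ C, ∃ τ ∈ D, IsMerge π σ τ}

/-- The empty permutation. -/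
def pempty : PPerm := ⟨0, 1⟩

/-- The singleton permutation `1`. -/
def pone : PPerm := ⟨1, 1⟩

/-- Iterated merge of a list of classes. -/
def MergeAll : List (Set PPerm) → Set PPerm
  | [] => {pempty}
  | [C] => C
  | C :: D :: Cs => MergeCl C (MergeAll (D :: Cs))

/-- A class is splittable if it is contained in the merge of finitely many
of its proper subclasses. -/
def Splittable (C : Set PPerm) : Prop :=
  ∃ Cs : List (Set PPerm), Cs ≠ [] ∧
    (∀ D ∈ Cs, IsPermClass D ∧ D ⊆ C ∧ D ≠ C) ∧ C ⊆ MergeAll Cs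

/-- A class is atomic if it is not the union of two proper subclasses. -/
def Atomic (C : Set PPerm) : Prop :=
  ¬ ∃ D E : Set PPerm, IsPermClass D ∧ IsPermClass E ∧
      D ⊆ C ∧ D ≠ C ∧ E ⊆ C ∧ E ≠ C ∧ C = D ∪ E

/-- Inflation `A[B]` of a class `A` by a class `B`: `π` decomposes into
consecutive nonempty blocks (given by the fibres of the monotone surjection `g`),
the relative order of distinct blocks follows `σ ∈ A`, and each block has its
pattern in `B`. -/
def Inflate (A B : Set PPerm) : Set PPerm :=
  {π | ∃ σ ∈ A, ∃ g : Fin π.1 → Fin σ.1, Monotone g ∧ Function.Surjective g ∧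
    (∀ p q, g p ≠ g q → (π.2 p < π.2 q ↔ σ.2 (g p) < σ.2 (g q))) ∧
    ∀ b : Fin σ.1, ∃ τ ∈ B, PatternOf π {p | g p = b} τ}

/-- Direct sum `σ ⊕ τ`. -/
def psum (σ τ : PPerm) : PPerm :=
  ⟨σ.1 + τ.1, finSumFinEquiv.permCongr (σ.2.sumCongr τ.2)⟩

/-- Skew sum `σ ⊖ τ`. -/
def pskew (σ τ : PPerm) : PPerm :=
  ⟨σ.1 + τ.1,
    finSumFinEquiv.symm.trans ((σ.2.sumCongr τ.2).trans
      ((Equiv.sumComm (Fin σ.1) (Fin τ.1)).trans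
        (finSumFinEquiv.trans (finCongr (Nat.add_comm τ.1 σ.1)))))⟩

/-- Sum-decomposable: a direct sum of two nonempty permutations. -/
def SumDecomp (π : PPerm) : Prop :=
  ∃ σ τ : PPerm, 0 < σ.1 ∧ 0 < τ.1 ∧ π = psum σ τ

/-- Skew-decomposable: a skew sum of two nonempty permutations. -/
def SkewDecomp (π : PPerm) : Prop :=
  ∃ σ τ : PPerm, 0 < σ.1 ∧ 0 < τ.1 ∧ π = pskew σ τ

def SumClosed (C : Set PPerm) : Prop := ∀ σ ∈ C, ∀ τ ∈ C, psum σ τ ∈ C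

def SkewClosed (C : Set PPerm) : Prop := ∀ σ ∈ C, ∀ τ ∈ C, pskew σ τ ∈ C

/-- The class of permutations avoiding the pattern `σ`. -/
def Av (σ : PPerm) : Set PPerm := {π | ¬ Contains π σ}

/-- The basis of a class: minimal permutations not belonging to it. -/
def PBasis (C : Set PPerm) : Set PPerm :=
  {π | π ∉ C ∧ ∀ σ : PPerm, Contains π σ → σ ≠ π → σ ∈ C}

/-- An interval of `π`: a set of points contiguous in positions and in values. -/
def IsInterval (π : PPerm) (S : Set (Fin π.1)) : Prop :=
  (∀ a ∈ S, ∀ b ∈ S, ∀ c, a ≤ c → c ≤ b → c ∈ S) ∧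
  (∀ a ∈ S, ∀ b ∈ S, ∀ c, π.2 a ≤ π.2 c → π.2 c ≤ π.2 b → c ∈ S)

/-- A simple permutation: its only intervals are the subsingletons and the whole. -/
def SimplePerm (π : PPerm) : Prop :=
  ∀ S : Set (Fin π.1), IsInterval π S → S.Subsingleton ∨ S = Set.univ

/-- Build a permutation from a function with an explicit inverse. -/
def mkP {n : ℕ} (f g : Fin n → Fin n)
    (h₁ : ∀ i, g (f i) = i) (h₂ : ∀ i, f (g i) = i) : PPerm :=
  ⟨n, ⟨f, g, h₁, h₂⟩⟩

def p12 : PPerm := ⟨2, 1⟩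
def p21 : PPerm := mkP ![1,0] ![1,0] (by decide) (by decide)
def p213 : PPerm := mkP ![1,0,2] ![1,0,2] (by decide) (by decide)
def p231 : PPerm := mkP ![1,2,0] ![2,0,1] (by decide) (by decide)
def p312 : PPerm := mkP ![2,0,1] ![1,2,0] (by decide) (by decide)
def p1234 : PPerm := ⟨4, 1⟩
def p2143 : PPerm := mkP ![1,0,3,2] ![1,0,3,2] (by decide) (by decide)
def p3412 : PPerm := mkP ![2,3,0,1] ![2,3,0,1] (by decide) (by decide)
def p4321 : PPerm := mkP ![3,2,1,0] ![3,2,1,0] (by decide) (by decide)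
def p2413 : PPerm := mkP ![1,3,0,2] ![2,0,3,1] (by decide) (by decide)
def p3142 : PPerm := mkP ![2,0,3,1] ![1,3,0,2] (by decide) (by decide)

/-- The class `I` of increasing permutations. -/
def IncCl : Set PPerm := Av p21
/-- The class `D` of decreasing permutations. -/
def DecCl : Set PPerm := Av p12
/-- The class `Av(213)`. -/
def Av213 : Set PPerm := Av p213
/-- The class `L = Av(231, 312)` of layered permutations. -/
def Layered : Set PPerm := Av p231 ∩ Av p312
/-- Separable permutations, characterised by avoidance of `2413` and `3142`. -/
def SepA : Set PPerm := Av p2413 ∩ Av p3142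
/-- Separable permutations avoiding every element of `F`. -/
def Avs (F : Set PPerm) : Set PPerm := {π ∈ SepA | ∀ τ ∈ F, ¬ Contains π τ}
/-- The class of separable permutations, defined as the smallest permutation class
containing `1` and closed under direct sums and skew sums. -/
def SepCl : Set PPerm :=
  ⋂₀ {C : Set PPerm | IsPermClass C ∧ pone ∈ C ∧
      ∀ σ ∈ C, ∀ τ ∈ C, psum σ τ ∈ C ∧ pskew σ τ ∈ C}

attribute [local instance] Classical.propDecidable

namespace Aux

theorem p231_one : p231.1 = 3 := rfl

example : p231.2 ⟨2, by decide⟩ < p231.2 ⟨0, by decide⟩ := by decide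

example (i : Fin p231.1) : i.1 < 3 := i.2

example (σ : PPerm) (h : Contains σ p231) : True := by
  obtain ⟨f, hf, hc⟩ := h
  have h1 := hf (show (⟨0, by decide⟩ : Fin p231.1) < ⟨1, by decide⟩ by decide)
  have h2 := (hc ⟨2, by decide⟩ ⟨0, by decide⟩).1 (by decide)
  trivial

def No231 (π : PPerm) : Prop :=
  ∀ a b c : Fin π.1, a < b → b < c → ¬ (π.2 c < π.2 a ∧ π.2 a < π.2 b)

def No312 (π : PPerm) : Prop :=
  ∀ a b c : Fin π.1, a < b → b < c → ¬ (π.2 b < π.2 c ∧ π.2 c < π.2 a)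

def HasU : ℕ → (π : PPerm) → Finset (Fin π.1) → Prop
  | 0, _, _ => True
  | (m+1), π, S => ∃ v ∈ S, HasU m π (S.filter fun x => x < v ∧ π.2 x < π.2 v)
      ∧ HasU m π (S.filter fun x => v < x ∧ π.2 x < π.2 v)

theorem HasU.mono : ∀ {m : ℕ} {π : PPerm} {S T : Finset (Fin π.1)},
    S ⊆ T → HasU m π S → HasU m π T
  | 0, _, _, _, _, _ => trivial
  | (_+1), _, _, _, hST, ⟨v, hv, hL, hR⟩ =>
    ⟨v, hST hv, HasU.mono (Finset.filter_subset_filter _ hST) hL,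
      HasU.mono (Finset.filter_subset_filter _ hST) hR⟩


def IncS (π : PPerm) (S : Finset (Fin π.1)) : Prop :=
  ∀ a ∈ S, ∀ b ∈ S, a < b → π.2 a < π.2 b

def DecS (π : PPerm) (S : Finset (Fin π.1)) : Prop :=
  ∀ a ∈ S, ∀ b ∈ S, a < b → π.2 b < π.2 a

def LayS (π : PPerm) (S : Finset (Fin π.1)) : Prop :=
  ∀ a ∈ S, ∀ b ∈ S, ∀ c ∈ S, a < b → b < c →
    ¬ (π.2 c < π.2 a ∧ π.2 a < π.2 b) ∧ ¬ (π.2 b < π.2 c ∧ π.2 c < π.2 a)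

theorem LayS.subset {π : PPerm} {S T : Finset (Fin π.1)} (h : T ⊆ S)
    (hS : LayS π S) : LayS π T :=
  fun a ha b hb c hc hab hbc => hS a (h ha) b (h hb) c (h hc) hab hbc

theorem IncS.lay {π : PPerm} {S : Finset (Fin π.1)} (h : IncS π S) : LayS π S := by
  intro a ha b hb c hc hab hbc
  have h1 := h a ha c hc (lt_trans hab hbc)
  exact ⟨fun hh => absurd hh.1 (lt_asymm h1), fun hh => absurd hh.2 (lt_asymm h1)⟩

theorem DecS.lay {π : PPerm} {S : Finset (Fin π.1)} (h : DecS π S) : LayS π S := by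
  intro a ha b hb c hc hab hbc
  have h1 := h a ha b hb hab
  have h2 := h b hb c hc hbc
  exact ⟨fun hh => absurd hh.2 (lt_asymm h1), fun hh => absurd hh.1 (lt_asymm h2)⟩

/-- `S` lies entirely before and below `T`. -/
def LB (π : PPerm) (S T : Finset (Fin π.1)) : Prop :=
  ∀ a ∈ S, ∀ b ∈ T, a < b ∧ π.2 a < π.2 b

theorem LB.mono {π : PPerm} {S T S' T' : Finset (Fin π.1)} (hS : S' ⊆ S) (hT : T' ⊆ T)
    (h : LB π S T) : LB π S' T' := fun a ha b hb => h a (hS ha) b (hT hb)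

theorem lay_union {π : PPerm} {S T : Finset (Fin π.1)} (hS : LayS π S) (hT : LayS π T)
    (h : LB π S T) : LayS π (S ∪ T) := by
  intro a ha b hb c hc hab hbc
  rw [Finset.mem_union] at ha hb hc
  rcases ha with ha | ha
  · rcases hb with hb | hb
    · rcases hc with hc | hc
      · exact hS a ha b hb c hc hab hbc
      · have h1 := (h a ha c hc).2
        exact ⟨fun hh => absurd hh.1 (lt_asymm h1), fun hh => absurd hh.2 (lt_asymm h1)⟩
    · rcases hc with hc | hc
      · exact absurd (h c hc b hb).1 (lt_asymm hbc)
      · have h1 := (h a ha c hc).2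
        exact ⟨fun hh => absurd hh.1 (lt_asymm h1), fun hh => absurd hh.2 (lt_asymm h1)⟩
  · rcases hb with hb | hb
    · exact absurd (h b hb a ha).1 (lt_asymm hab)
    · rcases hc with hc | hc
      · exact absurd (h c hc b hb).1 (lt_asymm hbc)
      · exact hT a ha b hb c hc hab hbc

theorem inc_union {π : PPerm} {S T : Finset (Fin π.1)} (hS : IncS π S) (hT : IncS π T)
    (h : LB π S T) : IncS π (S ∪ T) := by
  intro a ha b hb hab
  rw [Finset.mem_union] at ha hb
  rcases ha with ha | ha <;> rcases hb with hb | hb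
  · exact hS a ha b hb hab
  · exact (h a ha b hb).2
  · exact absurd (h b hb a ha).1 (lt_asymm hab)
  · exact hT a ha b hb hab

/-- `S` lies entirely before and above `T`. -/
def LA (π : PPerm) (S T : Finset (Fin π.1)) : Prop :=
  ∀ a ∈ S, ∀ b ∈ T, a < b ∧ π.2 b < π.2 a

theorem dec_union {π : PPerm} {S T : Finset (Fin π.1)} (hS : DecS π S) (hT : DecS π T)
    (h : LA π S T) : DecS π (S ∪ T) := by
  intro a ha b hb hab
  rw [Finset.mem_union] at ha hb
  rcases ha with ha | ha <;> rcases hb with hb | hb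
  · exact hS a ha b hb hab
  · exact (h a ha b hb).2
  · exact absurd (h b hb a ha).1 (lt_asymm hab)
  · exact hT a ha b hb hab

theorem lay_biUnion {π : PPerm} {M : Finset (Fin π.1)} {F : Fin π.1 → Finset (Fin π.1)}
    (hF : ∀ y ∈ M, LayS π (F y))
    (hLB : ∀ y ∈ M, ∀ z ∈ M, y < z → LB π (F y) (F z)) :
    LayS π (M.biUnion F) := by
  have rel : ∀ {y z : Fin π.1} {p q : Fin π.1}, y ∈ M → z ∈ M → p ∈ F y → q ∈ F z →
      p < q → (y = z ∨ y < z) := by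
    intro y z p q hy hz hp hq hpq
    rcases lt_trichotomy y z with h' | h' | h'
    · exact Or.inr h'
    · exact Or.inl h'
    · exact absurd (hLB z hz y hy h' q hq p hp).1 (lt_asymm hpq)
  intro a ha b hb c hc hab hbc
  simp only [Finset.mem_biUnion] at ha hb hc
  obtain ⟨ya, hya, ha⟩ := ha
  obtain ⟨yb, hyb, hb⟩ := hb
  obtain ⟨yc, hyc, hc⟩ := hc
  have h1 := rel hya hyb ha hb hab
  have h2 := rel hyb hyc hb hc hbc
  have key : ya = yc ∨ π.2 a < π.2 c := by
    rcases h1 with h1 | h1 <;> rcases h2 with h2 | h2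
    · exact Or.inl (h1.trans h2)
    · exact Or.inr (hLB ya hya yc hyc (by rw [h1]; exact h2) a ha c hc).2
    · exact Or.inr (hLB ya hya yc hyc (by rw [← h2]; exact h1) a ha c hc).2
    · exact Or.inr (hLB ya hya yc hyc (lt_trans h1 h2) a ha c hc).2
  rcases key with heq | hac
  · have hba : yb = ya := by
      rcases h1 with h1 | h1
      · exact h1.symm
      · exfalso
        rcases h2 with h2 | h2
        · rw [h2, ← heq] at h1; exact lt_irrefl _ h1
        · have h3 := lt_trans h1 h2; rw [← heq] at h3; exact lt_irrefl _ h3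
    rw [heq] at ha
    rw [hba, heq] at hb
    exact hF yc hyc a ha b hb c hc hab hbc
  · exact ⟨fun hh => absurd hh.1 (lt_asymm hac), fun hh => absurd hh.2 (lt_asymm hac)⟩

theorem contains_trans {π σ ρ : PPerm} (h1 : Contains π σ) (h2 : Contains σ ρ) :
    Contains π ρ := by
  obtain ⟨f, hf, hcf⟩ := h1
  obtain ⟨g, hg, hcg⟩ := h2
  exact ⟨f ∘ g, hf.comp hg, fun i j => (hcg i j).trans (hcf (g i) (g j))⟩

theorem isPermClass_av (τ : PPerm) : IsPermClass (Av τ) := by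
  intro π hπ σ hcont hσ
  exact hπ (contains_trans hcont hσ)

theorem isPermClass_layered : IsPermClass Layered := by
  intro π hπ σ hcont
  exact ⟨isPermClass_av p231 π hπ.1 σ hcont, isPermClass_av p312 π hπ.2 σ hcont⟩

theorem contains231_iff (σ : PPerm) :
    Contains σ p231 ↔ ∃ a b c : Fin σ.1, a < b ∧ b < c ∧ σ.2 c < σ.2 a ∧ σ.2 a < σ.2 b := by
  constructor
  · rintro ⟨f, hf, hc⟩
    refine ⟨f ⟨0, by decide⟩, f ⟨1, by decide⟩, f ⟨2, by decide⟩,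
      hf (by decide), hf (by decide), ?_, ?_⟩
    · exact (hc ⟨2, by decide⟩ ⟨0, by decide⟩).1 (by decide)
    · exact (hc ⟨0, by decide⟩ ⟨1, by decide⟩).1 (by decide)
  · rintro ⟨a, b, c, hab, hbc, h1, h2⟩
    have h3 : σ.2 c < σ.2 b := lt_trans h1 h2
    refine ⟨![a,b,c], ?_, ?_⟩
    · intro i j hij
      fin_cases i <;> fin_cases j <;>
        first | exact absurd hij (by decide) | exact hab | exact hbc | exact lt_trans hab hbc
    · intro i j
      fin_cases i <;> fin_cases j <;>
        first
        | exact iff_of_false (by decide) (lt_irrefl _)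
        | exact iff_of_true (by decide) h1
        | exact iff_of_true (by decide) h2
        | exact iff_of_true (by decide) h3
        | exact iff_of_false (by decide) (lt_asymm h1)
        | exact iff_of_false (by decide) (lt_asymm h2)
        | exact iff_of_false (by decide) (lt_asymm h3)

theorem contains312_iff (σ : PPerm) :
    Contains σ p312 ↔ ∃ a b c : Fin σ.1, a < b ∧ b < c ∧ σ.2 b < σ.2 c ∧ σ.2 c < σ.2 a := by
  constructor
  · rintro ⟨f, hf, hc⟩
    refine ⟨f ⟨0, by decide⟩, f ⟨1, by decide⟩, f ⟨2, by decide⟩,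
      hf (by decide), hf (by decide), ?_, ?_⟩
    · exact (hc ⟨1, by decide⟩ ⟨2, by decide⟩).1 (by decide)
    · exact (hc ⟨2, by decide⟩ ⟨0, by decide⟩).1 (by decide)
  · rintro ⟨a, b, c, hab, hbc, h1, h2⟩
    have h3 : σ.2 b < σ.2 a := lt_trans h1 h2
    refine ⟨![a,b,c], ?_, ?_⟩
    · intro i j hij
      fin_cases i <;> fin_cases j <;>
        first | exact absurd hij (by decide) | exact hab | exact hbc | exact lt_trans hab hbc
    · intro i j
      fin_cases i <;> fin_cases j <;>
        first
        | exact iff_of_false (by decide) (lt_irrefl _)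
        | exact iff_of_true (by decide) h1
        | exact iff_of_true (by decide) h2
        | exact iff_of_true (by decide) h3
        | exact iff_of_false (by decide) (lt_asymm h1)
        | exact iff_of_false (by decide) (lt_asymm h2)
        | exact iff_of_false (by decide) (lt_asymm h3)

theorem no231_of_av {π : PPerm} (h : π ∈ Av p231) : No231 π := by
  intro a b c hab hbc hcon
  exact h ((contains231_iff π).2 ⟨a, b, c, hab, hbc, hcon.1, hcon.2⟩)

theorem exists_pattern (π : PPerm) (S : Finset (Fin π.1)) :
    ∃ (σ : PPerm) (f : Fin σ.1 → Fin π.1), StrictMono f ∧ Set.range f = ↑S ∧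
      ∀ i j, σ.2 i < σ.2 j ↔ π.2 (f i) < π.2 (f j) := by
  classical
  set k := S.card with hk
  let e : Fin k ≃o {x // x ∈ S} := S.orderIsoOfFin rfl
  let f : Fin k → Fin π.1 := fun i => (e i : Fin π.1)
  have hf : StrictMono f := fun i j hij => by
    exact Subtype.coe_lt_coe.2 (e.lt_iff_lt.2 hij)
  have hrange : Set.range f = ↑S := by
    ext x
    constructor
    · rintro ⟨i, rfl⟩
      exact (e i).2
    · intro hx
      exact ⟨e.symm ⟨x, hx⟩, by simp [f]⟩
  let T : Finset (Fin π.1) := S.image π.2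
  have hT : T.card = k := Finset.card_image_of_injective S π.2.injective
  let ev : Fin k ≃o {x // x ∈ T} := T.orderIsoOfFin hT
  have hmem : ∀ i, π.2 (f i) ∈ T := fun i => Finset.mem_image_of_mem _ (e i).2
  let σf : Fin k → Fin k := fun i => ev.symm ⟨π.2 (f i), hmem i⟩
  have hσf : ∀ i j, σf i < σf j ↔ π.2 (f i) < π.2 (f j) := by
    intro i j
    show ev.symm _ < ev.symm _ ↔ _
    rw [ev.symm.lt_iff_lt]
    exact Subtype.mk_lt_mk
  have hinj : Function.Injective σf := by
    intro i j hij
    have h2 : π.2 (f i) = π.2 (f j) := by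
      have := ev.symm.injective hij
      exact Subtype.mk_eq_mk.1 this
    exact hf.injective (π.2.injective h2)
  refine ⟨⟨k, Equiv.ofBijective σf (Finite.injective_iff_bijective.1 hinj)⟩, f, hf, hrange, ?_⟩
  intro i j
  exact hσf i j

theorem pattern_lay {π σ : PPerm} {S : Finset (Fin π.1)} {f : Fin σ.1 → Fin π.1}
    (hf : StrictMono f) (hrange : Set.range f = ↑S)
    (hvals : ∀ i j, σ.2 i < σ.2 j ↔ π.2 (f i) < π.2 (f j))
    (hLay : LayS π S) : σ ∈ Layered := by
  have hmem : ∀ i, f i ∈ S := by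
    intro i
    have : f i ∈ Set.range f := Set.mem_range_self i
    rw [hrange] at this
    exact this
  constructor <;> intro hcon
  · obtain ⟨a, b, c, hab, hbc, h1, h2⟩ := (contains231_iff σ).1 hcon
    exact (hLay (f a) (hmem a) (f b) (hmem b) (f c) (hmem c) (hf hab) (hf hbc)).1
      ⟨(hvals _ _).1 h1, (hvals _ _).1 h2⟩
  · obtain ⟨a, b, c, hab, hbc, h1, h2⟩ := (contains312_iff σ).1 hcon
    exact (hLay (f a) (hmem a) (f b) (hmem b) (f c) (hmem c) (hf hab) (hf hbc)).2
      ⟨(hvals _ _).1 h1, (hvals _ _).1 h2⟩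

theorem lay_whole {π : PPerm} (h : LayS π Finset.univ) : π ∈ Layered := by
  constructor <;> intro hcon
  · obtain ⟨a, b, c, hab, hbc, h1, h2⟩ := (contains231_iff π).1 hcon
    exact (h a (Finset.mem_univ a) b (Finset.mem_univ b) c (Finset.mem_univ c) hab hbc).1 ⟨h1, h2⟩
  · obtain ⟨a, b, c, hab, hbc, h1, h2⟩ := (contains312_iff π).1 hcon
    exact (h a (Finset.mem_univ a) b (Finset.mem_univ b) c (Finset.mem_univ c) hab hbc).2 ⟨h1, h2⟩

theorem mem_mergeAll_replicate : ∀ (k : ℕ) (π : PPerm) (P : Fin (k+1) → Finset (Fin π.1)),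
    (∀ x, ∃ j, x ∈ P j) → (∀ j, LayS π (P j)) →
    π ∈ MergeAll (List.replicate (k+1) Layered) := by
  intro k
  induction k with
  | zero =>
    intro π P hcov hlay
    show π ∈ Layered
    have huniv : Finset.univ ⊆ P 0 := by
      intro x _
      obtain ⟨j, hj⟩ := hcov x
      have hj0 : j = 0 := Fin.fin_one_eq_zero j
      rwa [hj0] at hj
    exact lay_whole ((hlay 0).subset huniv)
  | succ k ih =>
    intro π P hcov hlay
    show π ∈ MergeCl Layered (MergeAll (List.replicate (k+1) Layered))
    obtain ⟨σ, f, hfmono, hfrange, hfvals⟩ := exists_pattern π (P 0)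
    obtain ⟨τ, g, hgmono, hgrange, hgvals⟩ := exists_pattern π (Finset.univ \ P 0)
    have hgmem : ∀ t, g t ∈ Finset.univ \ P 0 := by
      intro t
      have : g t ∈ Set.range g := Set.mem_range_self t
      rw [hgrange] at this
      exact this
    refine ⟨σ, pattern_lay hfmono hfrange hfvals (hlay 0), τ, ?_, ↑(P 0),
      ⟨f, hfmono, hfrange, hfvals⟩, ⟨g, hgmono, ?_, hgvals⟩⟩
    · apply ih τ (fun j => Finset.univ.filter (fun t => g t ∈ P j.succ))
      · intro t
        obtain ⟨j, hj⟩ := hcov (g t)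
        rcases Fin.eq_zero_or_eq_succ j with h0 | ⟨j', rfl⟩
        · rw [h0] at hj
          exact absurd hj (Finset.mem_sdiff.1 (hgmem t)).2
        · exact ⟨j', Finset.mem_filter.2 ⟨Finset.mem_univ t, hj⟩⟩
      · intro j a ha b hb c hc hab hbc
        rw [Finset.mem_filter] at ha hb hc
        have hh := hlay j.succ (g a) ha.2 (g b) hb.2 (g c) hc.2 (hgmono hab) (hgmono hbc)
        constructor
        · rintro ⟨x1, x2⟩
          exact hh.1 ⟨(hgvals _ _).1 x1, (hgvals _ _).1 x2⟩
        · rintro ⟨x1, x2⟩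
          exact hh.2 ⟨(hgvals _ _).1 x1, (hgvals _ _).1 x2⟩
    · rw [hgrange]
      simp [Set.diff_eq]

theorem hasU_embed : ∀ (m : ℕ) (π β : PPerm), No231 π → No231 β →
    ∀ S : Finset (Fin π.1), HasU m π S →
    ∀ T : Finset (Fin β.1), T.card ≤ m →
    ∃ g : {x // x ∈ T} → Fin π.1, (∀ x, g x ∈ S) ∧
      ∀ x y : {x // x ∈ T}, ((x : Fin β.1) < (y : Fin β.1) ↔ g x < g y) ∧
        (β.2 x < β.2 y ↔ π.2 (g x) < π.2 (g y)) := by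
  intro m
  induction m with
  | zero =>
    intro π β hπ hβ S hS T hT
    have hT0 : T = ∅ := Finset.card_eq_zero.1 (Nat.le_zero.1 hT)
    subst hT0
    exact ⟨fun x => absurd x.2 (Finset.notMem_empty _),
      fun x => absurd x.2 (Finset.notMem_empty _),
      fun x => absurd x.2 (Finset.notMem_empty _)⟩
  | succ m ih =>
    intro π β hπ hβ S hS T hT
    by_cases hTe : T = ∅
    · subst hTe
      exact ⟨fun x => absurd x.2 (Finset.notMem_empty _),
        fun x => absurd x.2 (Finset.notMem_empty _),
        fun x => absurd x.2 (Finset.notMem_empty _)⟩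
    obtain ⟨vT, hvT, hvTmax⟩ :=
      Finset.exists_max_image T β.2 (Finset.nonempty_iff_ne_empty.2 hTe)
    obtain ⟨v, hv, hL, hR⟩ := hS
    set SL := S.filter (fun x => x < v ∧ π.2 x < π.2 v) with hSLdef
    set SR := S.filter (fun x => v < x ∧ π.2 x < π.2 v) with hSRdef
    set TL := T.filter (fun x => x < vT) with hTLdef
    set TR := T.filter (fun x => vT < x) with hTRdef
    have hTLcard : TL.card ≤ m := by
      have hsub : TL ⊆ T.erase vT := by
        intro x hx
        rw [hTLdef, Finset.mem_filter] at hx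
        exact Finset.mem_erase.2 ⟨ne_of_lt hx.2, hx.1⟩
      have h1 := Finset.card_le_card hsub
      rw [Finset.card_erase_of_mem hvT] at h1
      omega
    have hTRcard : TR.card ≤ m := by
      have hsub : TR ⊆ T.erase vT := by
        intro x hx
        rw [hTRdef, Finset.mem_filter] at hx
        exact Finset.mem_erase.2 ⟨(ne_of_lt hx.2).symm, hx.1⟩
      have h1 := Finset.card_le_card hsub
      rw [Finset.card_erase_of_mem hvT] at h1
      omega
    obtain ⟨gL, hgLS, hgL⟩ := ih π β hπ hβ SL hL TL hTLcard
    obtain ⟨gR, hgRS, hgR⟩ := ih π β hπ hβ SR hR TR hTRcard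
    have hmax : ∀ x : Fin β.1, x ∈ T → x ≠ vT → β.2 x < β.2 vT := fun x hx hne =>
      lt_of_le_of_ne (hvTmax x hx) (fun h => hne (β.2.injective h))
    have hSLspec : ∀ x ∈ SL, x < v ∧ π.2 x < π.2 v := by
      intro x hx; rw [hSLdef, Finset.mem_filter] at hx; exact hx.2
    have hSRspec : ∀ x ∈ SR, v < x ∧ π.2 x < π.2 v := by
      intro x hx; rw [hSRdef, Finset.mem_filter] at hx; exact hx.2
    have hTLspec : ∀ x : Fin β.1, x ∈ TL → x ∈ T ∧ x < vT := by
      intro x hx; rw [hTLdef, Finset.mem_filter] at hx; exact hx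
    have hTRspec : ∀ x : Fin β.1, x ∈ TR → x ∈ T ∧ vT < x := by
      intro x hx; rw [hTRdef, Finset.mem_filter] at hx; exact hx
    have hcrossβ : ∀ x ∈ TL, ∀ y ∈ TR, β.2 x < β.2 y := by
      intro x hx y hy
      obtain ⟨hxT, hxlt⟩ := hTLspec x hx
      obtain ⟨hyT, hylt⟩ := hTRspec y hy
      by_contra hcon
      push_neg at hcon
      have hxy : β.2 y < β.2 x :=
        lt_of_le_of_ne hcon (fun h => ne_of_lt (lt_trans hxlt hylt) (β.2.injective h.symm))
      exact hβ x vT y hxlt hylt ⟨hxy, hmax x hxT (ne_of_lt hxlt)⟩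
    have hcrossπ : ∀ p ∈ SL, ∀ q ∈ SR, π.2 p < π.2 q := by
      intro p hp q hq
      obtain ⟨hp1, hp2⟩ := hSLspec p hp
      obtain ⟨hq1, hq2⟩ := hSRspec q hq
      by_contra hcon
      push_neg at hcon
      have hqp : π.2 q < π.2 p :=
        lt_of_le_of_ne hcon (fun h => ne_of_lt (lt_trans hp1 hq1) (π.2.injective h.symm))
      exact hπ p v q hp1 hq1 ⟨hqp, hp2⟩
    have hSLS : SL ⊆ S := by rw [hSLdef]; exact Finset.filter_subset _ _
    have hSRS : SR ⊆ S := by rw [hSRdef]; exact Finset.filter_subset _ _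
    have hvTnotL : vT ∉ TL := by
      intro h; exact lt_irrefl vT (hTLspec vT h).2
    have hvTnotR : vT ∉ TR := by
      intro h; exact lt_irrefl vT (hTRspec vT h).2
    have hcases : ∀ z : {x // x ∈ T},
        (z : Fin β.1) ∈ TL ∨ (z : Fin β.1) = vT ∨ (z : Fin β.1) ∈ TR := by
      intro z
      rcases lt_trichotomy (z : Fin β.1) vT with h | h | h
      · exact Or.inl (by rw [hTLdef]; exact Finset.mem_filter.2 ⟨z.2, h⟩)
      · exact Or.inr (Or.inl h)
      · exact Or.inr (Or.inr (by rw [hTRdef]; exact Finset.mem_filter.2 ⟨z.2, h⟩))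
    refine ⟨fun z => if hzL : (z : Fin β.1) ∈ TL then gL ⟨z.1, hzL⟩ else
      if hzR : (z : Fin β.1) ∈ TR then gR ⟨z.1, hzR⟩ else v, ?_, ?_⟩
    · intro z
      dsimp only
      split_ifs with h1 h2
      · exact hSLS (hgLS _)
      · exact hSRS (hgRS _)
      · exact hv
    · intro x y
      dsimp only
      rcases hcases x with hx | hx | hx <;> rcases hcases y with hy | hy | hy
      · rw [dif_pos hx, dif_pos hy]
        exact hgL ⟨x.1, hx⟩ ⟨y.1, hy⟩
      · rw [dif_pos hx, dif_neg (hy ▸ hvTnotL), dif_neg (hy ▸ hvTnotR)]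
        constructor
        · rw [hy]
          exact iff_of_true (hTLspec _ hx).2 (hSLspec _ (hgLS ⟨x.1, hx⟩)).1
        · rw [hy]
          exact iff_of_true (hmax _ x.2 (ne_of_lt (hTLspec _ hx).2))
            (hSLspec _ (hgLS ⟨x.1, hx⟩)).2
      · rw [dif_pos hx, dif_neg (fun h => absurd (hTRspec _ hy).2
          (lt_asymm (hTLspec _ h).2)), dif_pos hy]
        constructor
        · exact iff_of_true (lt_trans (hTLspec _ hx).2 (hTRspec _ hy).2)
            (lt_trans (hSLspec _ (hgLS ⟨x.1, hx⟩)).1 (hSRspec _ (hgRS ⟨y.1, hy⟩)).1)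
        · exact iff_of_true (hcrossβ _ hx _ hy)
            (hcrossπ _ (hgLS ⟨x.1, hx⟩) _ (hgRS ⟨y.1, hy⟩))
      · rw [dif_neg (hx ▸ hvTnotL), dif_neg (hx ▸ hvTnotR), dif_pos hy]
        constructor
        · rw [hx]
          exact iff_of_false (lt_asymm (hTLspec _ hy).2)
            (lt_asymm (hSLspec _ (hgLS ⟨y.1, hy⟩)).1)
        · rw [hx]
          exact iff_of_false (lt_asymm (hmax _ y.2 (ne_of_lt (hTLspec _ hy).2)))
            (lt_asymm (hSLspec _ (hgLS ⟨y.1, hy⟩)).2)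
      · rw [dif_neg (hx ▸ hvTnotL), dif_neg (hx ▸ hvTnotR),
          dif_neg (hy ▸ hvTnotL), dif_neg (hy ▸ hvTnotR)]
        constructor
        · rw [hx, hy]
          exact iff_of_false (lt_irrefl _) (lt_irrefl _)
        · rw [hx, hy]
          exact iff_of_false (lt_irrefl _) (lt_irrefl _)
      · rw [dif_neg (hx ▸ hvTnotL), dif_neg (hx ▸ hvTnotR), dif_neg (fun h =>
          absurd (hTRspec _ hy).2 (lt_asymm (hTLspec _ h).2)), dif_pos hy]
        constructor
        · rw [hx]
          exact iff_of_true (hTRspec _ hy).2 (hSRspec _ (hgRS ⟨y.1, hy⟩)).1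
        · rw [hx]
          exact iff_of_false (lt_asymm (hmax _ y.2 (ne_of_gt (hTRspec _ hy).2)))
            (lt_asymm (hSRspec _ (hgRS ⟨y.1, hy⟩)).2)
      · rw [dif_neg (fun h => absurd (hTRspec _ hx).2 (lt_asymm (hTLspec _ h).2)),
          dif_pos hx, dif_pos hy]
        constructor
        · exact iff_of_false (lt_asymm (lt_trans (hTLspec _ hy).2 (hTRspec _ hx).2))
            (lt_asymm (lt_trans (hSLspec _ (hgLS ⟨y.1, hy⟩)).1
              (hSRspec _ (hgRS ⟨x.1, hx⟩)).1))
        · exact iff_of_false (lt_asymm (hcrossβ _ hy _ hx))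
            (lt_asymm (hcrossπ _ (hgLS ⟨y.1, hy⟩) _ (hgRS ⟨x.1, hx⟩)))
      · rw [dif_neg (fun h => absurd (hTRspec _ hx).2 (lt_asymm (hTLspec _ h).2)),
          dif_pos hx, dif_neg (hy ▸ hvTnotL), dif_neg (hy ▸ hvTnotR)]
        constructor
        · rw [hy]
          exact iff_of_false (lt_asymm (hTRspec _ hx).2)
            (lt_asymm (hSRspec _ (hgRS ⟨x.1, hx⟩)).1)
        · rw [hy]
          exact iff_of_true (hmax _ x.2 (ne_of_gt (hTRspec _ hx).2))
            (hSRspec _ (hgRS ⟨x.1, hx⟩)).2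
      · rw [dif_neg (fun h => absurd (hTRspec _ hx).2 (lt_asymm (hTLspec _ h).2)),
          dif_pos hx, dif_neg (fun h => absurd (hTRspec _ hy).2
            (lt_asymm (hTLspec _ h).2)), dif_pos hy]
        exact hgR ⟨x.1, hx⟩ ⟨y.1, hy⟩

theorem LB.union_right {π : PPerm} {S T₁ T₂ : Finset (Fin π.1)}
    (h1 : LB π S T₁) (h2 : LB π S T₂) : LB π S (T₁ ∪ T₂) := by
  intro a ha b hb
  rcases Finset.mem_union.1 hb with hb | hb
  · exact h1 a ha b hb
  · exact h2 a ha b hb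

def MainStmt (π : PPerm) (m : ℕ) : Prop :=
  ∀ S : Finset (Fin π.1), ¬ HasU m π S →
    ∃ P : Fin (2*m) → Finset (Fin π.1),
      (∀ j, P j ⊆ S) ∧ (∀ x ∈ S, ∃ j, x ∈ P j) ∧ (∀ j, LayS π (P j))

def SplitStmt (π : PPerm) (m : ℕ) : Prop :=
  ∀ S : Finset (Fin π.1), ¬ HasU (m+1) π S →
    ∃ (X : Fin (2*m) → Finset (Fin π.1)) (Z W : Finset (Fin π.1)),
      (∀ j, X j ⊆ S) ∧ Z ⊆ S ∧ W ⊆ S ∧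
      (∀ x ∈ S, (∃ j, x ∈ X j) ∨ x ∈ Z ∨ x ∈ W) ∧
      (∀ j, LayS π (X j)) ∧ IncS π Z ∧ DecS π W

theorem main_zero (π : PPerm) : MainStmt π 0 := fun _ h => absurd trivial h

theorem main_succ {π : PPerm} {m : ℕ} (h : SplitStmt π m) : MainStmt π (m+1) := by
  intro S hS
  obtain ⟨X, Z, W, hXsub, hZsub, hWsub, hcov, hXlay, hZinc, hWdec⟩ := h S hS
  refine ⟨fun j => if hj : (j : ℕ) < 2*m then X ⟨j, hj⟩ else
    if (j : ℕ) = 2*m then Z else W, ?_, ?_, ?_⟩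
  · intro j
    dsimp only
    split_ifs
    exacts [hXsub _, hZsub, hWsub]
  · intro x hx
    rcases hcov x hx with ⟨j, hj⟩ | hx' | hx'
    · refine ⟨⟨(j : ℕ), by have := j.2; omega⟩, ?_⟩
      dsimp only
      rw [dif_pos j.2]
      rwa [Fin.eta]
    · refine ⟨⟨2*m, by omega⟩, ?_⟩
      dsimp only
      rw [dif_neg (by omega), if_pos rfl]
      exact hx'
    · refine ⟨⟨2*m+1, by omega⟩, ?_⟩
      dsimp only
      rw [dif_neg (by omega), if_neg (by omega)]
      exact hx'
  · intro j
    dsimp only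
    split_ifs
    exacts [hXlay _, hZinc.lay, hWdec.lay]

theorem blocks {π : PPerm} (hπ : No231 π) {m : ℕ} (hmain : MainStmt π m)
    (B : Finset (Fin π.1))
    (hB : ∀ y ∈ B, ¬ HasU m π (B.filter fun x => y < x ∧ π.2 x < π.2 y)) :
    ∃ (X : Fin (2*m) → Finset (Fin π.1)) (Z : Finset (Fin π.1)),
      (∀ j, X j ⊆ B) ∧ Z ⊆ B ∧ (∀ x ∈ B, (∃ j, x ∈ X j) ∨ x ∈ Z) ∧
      (∀ j, LayS π (X j)) ∧ IncS π Z := by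
  classical
  set M := B.filter (fun y => ∀ x ∈ B, x < y → π.2 x < π.2 y) with hMdef
  set I : Fin π.1 → Finset (Fin π.1) :=
    fun y => B.filter (fun x => y < x ∧ π.2 x < π.2 y) with hIdef
  have hMspec : ∀ y, y ∈ M → y ∈ B ∧ ∀ x ∈ B, x < y → π.2 x < π.2 y := by
    intro y hy; rw [hMdef, Finset.mem_filter] at hy; exact hy
  have hIspec : ∀ y x, x ∈ I y → x ∈ B ∧ y < x ∧ π.2 x < π.2 y := by
    intro y x hx; rw [hIdef, Finset.mem_filter] at hx; exact ⟨hx.1, hx.2⟩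
  have hPy : ∀ y : Fin π.1, ∃ P : Fin (2*m) → Finset (Fin π.1),
      y ∈ M → ((∀ j, P j ⊆ I y) ∧ (∀ x ∈ I y, ∃ j, x ∈ P j) ∧ (∀ j, LayS π (P j))) := by
    intro y
    by_cases hy : y ∈ M
    · obtain ⟨P, h1, h2, h3⟩ := hmain (I y) (hB y (hMspec y hy).1)
      exact ⟨P, fun _ => ⟨h1, h2, h3⟩⟩
    · exact ⟨fun _ => ∅, fun h => absurd h hy⟩
  choose P hP using hPy
  have keyLB : ∀ y ∈ M, ∀ z ∈ M, y < z → LB π (I y) (I z) := by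
    intro y hy z hz hyz a ha b hb
    obtain ⟨haB, hya, hva⟩ := hIspec y a ha
    obtain ⟨hbB, hzb, hvb⟩ := hIspec z b hb
    have hyB := (hMspec y hy).1
    have hyz' : π.2 y < π.2 z := (hMspec z hz).2 y hyB hyz
    have haz : a < z := by
      rcases lt_trichotomy a z with h | h | h
      · exact h
      · exact absurd (h ▸ hva) (lt_asymm hyz')
      · exact absurd (hπ y z a hyz h ⟨hva, hyz'⟩) not_false
    have hab : a < b := lt_trans haz hzb
    refine ⟨hab, ?_⟩
    rcases lt_trichotomy (π.2 a) (π.2 b) with h | h | h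
    · exact h
    · exact absurd (π.2.injective h) (ne_of_lt hab)
    · exact absurd (hπ a z b haz hzb ⟨h, lt_trans hva hyz'⟩) not_false
  refine ⟨fun j => M.biUnion (fun y => P y j), M, ?_, ?_, ?_, ?_, ?_⟩
  · intro j x hx
    obtain ⟨y, hyM, hxy⟩ := Finset.mem_biUnion.1 hx
    exact (hIspec y x ((hP y hyM).1 j hxy)).1
  · rw [hMdef]; exact Finset.filter_subset _ _
  · intro x hx
    by_cases hxM : x ∈ M
    · exact Or.inr hxM
    · left
      set Bx := B.filter (fun w => w ≤ x) with hBxdef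
      have hxBx : x ∈ Bx := by rw [hBxdef, Finset.mem_filter]; exact ⟨hx, le_refl x⟩
      obtain ⟨y, hyBx, hymax⟩ := Finset.exists_max_image Bx π.2 ⟨x, hxBx⟩
      rw [hBxdef, Finset.mem_filter] at hyBx
      obtain ⟨hyB, hyx⟩ := hyBx
      have hyM : y ∈ M := by
        rw [hMdef, Finset.mem_filter]
        refine ⟨hyB, fun w hw hwy => ?_⟩
        have hwBx : w ∈ Bx := by
          rw [hBxdef, Finset.mem_filter]
          exact ⟨hw, le_trans (le_of_lt hwy) hyx⟩
        exact lt_of_le_of_ne (hymax w hwBx) (fun h => (ne_of_lt hwy) (π.2.injective h))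
      -- x is not an LR max, so some earlier element beats it
      have hxw : ∃ w ∈ B, w < x ∧ π.2 x < π.2 w := by
        rw [hMdef, Finset.mem_filter] at hxM
        push_neg at hxM
        obtain ⟨w, hw, hwx, hwv⟩ := hxM hx
        refine ⟨w, hw, hwx, ?_⟩
        exact lt_of_le_of_ne hwv (fun h => (ne_of_lt hwx) (π.2.injective h.symm))
      obtain ⟨w, hwB, hwx, hxv⟩ := hxw
      have hwBx : w ∈ Bx := by
        rw [hBxdef, Finset.mem_filter]; exact ⟨hwB, le_of_lt hwx⟩
      have hxy : π.2 x < π.2 y := lt_of_lt_of_le hxv (hymax w hwBx)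
      have hyxlt : y < x := lt_of_le_of_ne hyx (fun h => (lt_irrefl _) (h ▸ hxy))
      have hxI : x ∈ I y := by
        rw [hIdef, Finset.mem_filter]; exact ⟨hx, hyxlt, hxy⟩
      obtain ⟨j, hj⟩ := (hP y hyM).2.1 x hxI
      exact ⟨j, Finset.mem_biUnion.2 ⟨y, hyM, hj⟩⟩
  · intro j
    apply lay_biUnion
    · intro y hy
      exact (hP y hy).2.2 j
    · intro y hy z hz hyz
      exact (keyLB y hy z hz hyz).mono ((hP y hy).1 j) ((hP z hz).1 j)
  · intro a ha b hb hab
    exact (hMspec b hb).2 a (hMspec a ha).1 hab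

theorem split_step {π : PPerm} (hπ : No231 π) {m : ℕ} (hmain : MainStmt π m) :
    SplitStmt π m := by
  classical
  suffices h : ∀ (n : ℕ) (S : Finset (Fin π.1)), S.card ≤ n → ¬ HasU (m+1) π S →
      ∃ (X : Fin (2*m) → Finset (Fin π.1)) (Z W : Finset (Fin π.1)),
        (∀ j, X j ⊆ S) ∧ Z ⊆ S ∧ W ⊆ S ∧
        (∀ x ∈ S, (∃ j, x ∈ X j) ∨ x ∈ Z ∨ x ∈ W) ∧
        (∀ j, LayS π (X j)) ∧ IncS π Z ∧ DecS π W by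
    exact fun S hS => h S.card S le_rfl hS
  intro n
  induction n with
  | zero =>
    intro S hcard _
    have hS0 : S = ∅ := Finset.card_eq_zero.1 (Nat.le_zero.1 hcard)
    subst hS0
    exact ⟨fun _ => ∅, ∅, ∅, fun _ => Finset.empty_subset _, Finset.empty_subset _,
      Finset.empty_subset _, fun x hx => absurd hx (Finset.notMem_empty _),
      fun _ a ha => absurd ha (Finset.notMem_empty _),
      fun a ha => absurd ha (Finset.notMem_empty _),
      fun a ha => absurd ha (Finset.notMem_empty _)⟩
  | succ n ihn =>
    intro S hcard hS
    set V := S.filter (fun v => HasU m π (S.filter fun x => v < x ∧ π.2 x < π.2 v)) with hVdef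
    by_cases hVe : V = ∅
    · have hyp : ∀ y ∈ S, ¬ HasU m π (S.filter fun x => y < x ∧ π.2 x < π.2 y) := by
        intro y hy hcon
        have : y ∈ V := by rw [hVdef, Finset.mem_filter]; exact ⟨hy, hcon⟩
        rw [hVe] at this
        exact absurd this (Finset.notMem_empty _)
      obtain ⟨X, Z, hXsub, hZsub, hcov, hXlay, hZinc⟩ := blocks hπ hmain S hyp
      exact ⟨X, Z, ∅, hXsub, hZsub, Finset.empty_subset _,
        fun x hx => (hcov x hx).imp id Or.inl, hXlay, hZinc,
        fun a ha => absurd ha (Finset.notMem_empty _)⟩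
    · obtain ⟨v₀, hv₀V, hv₀max⟩ :=
        Finset.exists_max_image V π.2 (Finset.nonempty_iff_ne_empty.2 hVe)
      rw [hVdef, Finset.mem_filter] at hv₀V
      obtain ⟨hv₀S, hv₀G⟩ := hv₀V
      set G := S.filter (fun x => v₀ < x ∧ π.2 x < π.2 v₀) with hGdef
      set A := S.filter (fun x => x < v₀) with hAdef
      set B := S.filter (fun x => v₀ < x ∧ π.2 v₀ < π.2 x) with hBdef
      have hGspec : ∀ x, x ∈ G → x ∈ S ∧ v₀ < x ∧ π.2 x < π.2 v₀ := by
        intro x hx; rw [hGdef, Finset.mem_filter] at hx; exact ⟨hx.1, hx.2⟩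
      have hAspec : ∀ x, x ∈ A → x ∈ S ∧ x < v₀ := by
        intro x hx; rw [hAdef, Finset.mem_filter] at hx; exact hx
      have hBspec : ∀ x, x ∈ B → x ∈ S ∧ v₀ < x ∧ π.2 v₀ < π.2 x := by
        intro x hx; rw [hBdef, Finset.mem_filter] at hx; exact ⟨hx.1, hx.2⟩
      -- everything before v₀ lies below v₀
      have hAbelow : ∀ x, x ∈ A → π.2 x < π.2 v₀ := by
        intro x hx
        obtain ⟨hxS, hxv⟩ := hAspec x hx
        rcases lt_trichotomy (π.2 x) (π.2 v₀) with h | h | h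
        · exact h
        · exact absurd (π.2.injective h) (ne_of_lt hxv)
        · exfalso
          have hsub : G ⊆ S.filter (fun z => x < z ∧ π.2 z < π.2 x) := by
            intro g hg
            obtain ⟨hgS, hgv, hgval⟩ := hGspec g hg
            rw [Finset.mem_filter]
            exact ⟨hgS, lt_trans hxv hgv, lt_trans hgval h⟩
          have hxV : x ∈ V := by
            rw [hVdef, Finset.mem_filter]
            exact ⟨hxS, hv₀G.mono hsub⟩
          exact absurd (hv₀max x hxV) (not_le.2 h)
      have hAU : ¬ HasU m π A := by
        intro hcon
        apply hS
        refine ⟨v₀, hv₀S, ?_, hv₀G⟩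
        refine HasU.mono ?_ hcon
        intro x hx
        rw [Finset.mem_filter]
        exact ⟨(hAspec x hx).1, (hAspec x hx).2, hAbelow x hx⟩
      have hGU : ¬ HasU (m+1) π G := by
        intro hcon
        exact hS (hcon.mono (by rw [hGdef]; exact Finset.filter_subset _ _))
      have hBU : ∀ y ∈ B, ¬ HasU m π (B.filter fun x => y < x ∧ π.2 x < π.2 y) := by
        intro y hy hcon
        obtain ⟨hyS, hyv, hyval⟩ := hBspec y hy
        have hyV : y ∈ V := by
          rw [hVdef, Finset.mem_filter]
          refine ⟨hyS, hcon.mono ?_⟩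
          intro x hx
          rw [Finset.mem_filter] at hx ⊢
          exact ⟨(hBspec x hx.1).1, hx.2⟩
        exact absurd (hv₀max y hyV) (not_le.2 hyval)
      have hGcard : G.card ≤ n := by
        have hsub : G ⊆ S.erase v₀ := by
          intro x hx
          exact Finset.mem_erase.2 ⟨(ne_of_lt (hGspec x hx).2.1).symm, (hGspec x hx).1⟩
        have h1 := Finset.card_le_card hsub
        rw [Finset.card_erase_of_mem hv₀S] at h1
        omega
      obtain ⟨PA, hPAsub, hPAcov, hPAlay⟩ := hmain A hAU
      obtain ⟨XG, ZG, WG, hXGsub, hZGsub, hWGsub, hGcov, hXGlay, hZGinc, hWGdec⟩ :=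
        ihn G hGcard hGU
      obtain ⟨XB, ZB, hXBsub, hZBsub, hBcov, hXBlay, hZBinc⟩ := blocks hπ hmain B hBU
      -- geometric relations
      have LBAG : LB π A G := by
        intro a ha g hg
        obtain ⟨haS, hav⟩ := hAspec a ha
        obtain ⟨hgS, hgv, hgval⟩ := hGspec g hg
        refine ⟨lt_trans hav hgv, ?_⟩
        rcases lt_trichotomy (π.2 a) (π.2 g) with h | h | h
        · exact h
        · exact absurd (π.2.injective h) (ne_of_lt (lt_trans hav hgv))
        · exact absurd (hπ a v₀ g hav hgv ⟨h, hAbelow a ha⟩) not_false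
      have LBAB : LB π A B := by
        intro a ha b hb
        exact ⟨lt_trans (hAspec a ha).2 (hBspec b hb).2.1,
          lt_trans (hAbelow a ha) (hBspec b hb).2.2⟩
      have LBGB : LB π G B := by
        intro g hg b hb
        obtain ⟨hgS, hgv, hgval⟩ := hGspec g hg
        obtain ⟨hbS, hbv, hbval⟩ := hBspec b hb
        have hval : π.2 g < π.2 b := lt_trans hgval hbval
        refine ⟨?_, hval⟩
        rcases lt_trichotomy g b with h | h | h
        · exact h
        · exact absurd (congrArg π.2 h) (ne_of_lt hval)
        · exact absurd (hπ v₀ b g hbv h ⟨hgval, hbval⟩) not_false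
      refine ⟨fun j => PA j ∪ (XG j ∪ XB j), ZG ∪ ZB, insert v₀ WG, ?_, ?_, ?_, ?_, ?_, ?_, ?_⟩
      · intro j x hx
        rcases Finset.mem_union.1 hx with hx | hx
        · exact (hAspec x (hPAsub j hx)).1
        · rcases Finset.mem_union.1 hx with hx | hx
          · exact (hGspec x (hXGsub j hx)).1
          · exact (hBspec x (hXBsub j hx)).1
      · intro x hx
        rcases Finset.mem_union.1 hx with hx | hx
        · exact (hGspec x (hZGsub hx)).1
        · exact (hBspec x (hZBsub hx)).1
      · intro x hx
        rcases Finset.mem_insert.1 hx with rfl | hx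
        · exact hv₀S
        · exact (hGspec x (hWGsub hx)).1
      · intro x hx
        rcases lt_trichotomy x v₀ with h | h | h
        · have hxA : x ∈ A := by rw [hAdef, Finset.mem_filter]; exact ⟨hx, h⟩
          obtain ⟨j, hj⟩ := hPAcov x hxA
          exact Or.inl ⟨j, Finset.mem_union_left _ hj⟩
        · exact Or.inr (Or.inr (Finset.mem_insert.2 (Or.inl h)))
        · rcases lt_trichotomy (π.2 x) (π.2 v₀) with h' | h' | h'
          · have hxG : x ∈ G := by rw [hGdef, Finset.mem_filter]; exact ⟨hx, h, h'⟩
            rcases hGcov x hxG with ⟨j, hj⟩ | hx' | hx'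
            · exact Or.inl ⟨j, Finset.mem_union_right _ (Finset.mem_union_left _ hj)⟩
            · exact Or.inr (Or.inl (Finset.mem_union_left _ hx'))
            · exact Or.inr (Or.inr (Finset.mem_insert.2 (Or.inr hx')))
          · exact absurd (π.2.injective h') (ne_of_gt h)
          · have hxB : x ∈ B := by rw [hBdef, Finset.mem_filter]; exact ⟨hx, h, h'⟩
            rcases hBcov x hxB with ⟨j, hj⟩ | hx'
            · exact Or.inl ⟨j, Finset.mem_union_right _ (Finset.mem_union_right _ hj)⟩
            · exact Or.inr (Or.inl (Finset.mem_union_right _ hx'))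
      · intro j
        apply lay_union (hPAlay j) (lay_union (hXGlay j) (hXBlay j)
          (LBGB.mono (hXGsub j) (hXBsub j)))
        exact (LB.union_right (LBAG.mono (Finset.Subset.refl _) (hXGsub j))
          (LBAB.mono (Finset.Subset.refl _) (hXBsub j))).mono (hPAsub j)
          (Finset.Subset.refl _)
      · exact inc_union hZGinc hZBinc (LBGB.mono hZGsub hZBsub)
      · rw [Finset.insert_eq]
        apply dec_union
        · intro a ha b hb hab
          rw [Finset.mem_singleton] at ha hb
          rw [ha, hb] at hab
          exact absurd hab (lt_irrefl _)
        · exact hWGdec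
        · intro a ha b hb
          rw [Finset.mem_singleton] at ha
          subst ha
          exact ⟨(hGspec b (hWGsub hb)).2.1, (hGspec b (hWGsub hb)).2.2⟩

theorem split_all {π : PPerm} (hπ : No231 π) : ∀ m, SplitStmt π m := by
  intro m
  induction m with
  | zero => exact split_step hπ (main_zero π)
  | succ m ihm => exact split_step hπ (main_succ ihm)

theorem main_all {π : PPerm} (hπ : No231 π) (m : ℕ) : MainStmt π m := by
  cases m with
  | zero => exact main_zero π
  | succ m => exact main_succ (split_all hπ m)

end Aux

/-- Every proper subclass of `Av(231)` is `L`-splittable: it is contained in the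
merge of finitely many subclasses of the layered permutations. -/
theorem stmt13 (C : Set PPerm) (hC : IsPermClass C)
    (hsub : C ⊆ Av p231) (hne : C ≠ Av p231) :
    ∃ Cs : List (Set PPerm), Cs ≠ [] ∧
      (∀ D ∈ Cs, IsPermClass D ∧ D ⊆ Layered) ∧ C ⊆ MergeAll Cs := by
  classical
  obtain ⟨β, hβav, hβC⟩ : ∃ β, β ∈ Av p231 ∧ β ∉ C := by
    by_contra h
    push_neg at h
    exact hne (Set.Subset.antisymm hsub (fun β hβ => h β hβ))
  have hCav : ∀ π ∈ C, ¬ Contains π β := fun π hπ hc => hβC (hC π hπ β hc)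
  refine ⟨List.replicate (2*β.1 + 1) Layered, by simp, ?_, ?_⟩
  · intro D hD
    rw [List.eq_of_mem_replicate hD]
    exact ⟨Aux.isPermClass_layered, Set.Subset.refl _⟩
  · intro π hπC
    have hπNo : Aux.No231 π := Aux.no231_of_av (hsub hπC)
    have hβNo : Aux.No231 β := Aux.no231_of_av hβav
    have hnoU : ¬ Aux.HasU β.1 π Finset.univ := by
      intro h
      obtain ⟨g, hgS, hg⟩ := Aux.hasU_embed β.1 π β hπNo hβNo Finset.univ h
        Finset.univ (by simp)
      apply hCav π hπC
      refine ⟨fun i => g ⟨i, Finset.mem_univ i⟩, ?_, ?_⟩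
      · intro i j hij
        exact (hg ⟨i, Finset.mem_univ i⟩ ⟨j, Finset.mem_univ j⟩).1.mp hij
      · intro i j
        exact (hg ⟨i, Finset.mem_univ i⟩ ⟨j, Finset.mem_univ j⟩).2
    obtain ⟨P, hPsub, hPcov, hPlay⟩ := Aux.main_all hπNo β.1 Finset.univ hnoU
    apply Aux.mem_mergeAll_replicate (2*β.1) π
      (fun j => if hj : (j : ℕ) < 2*β.1 then P ⟨j, hj⟩ else ∅)
    · intro x
      obtain ⟨j, hj⟩ := hPcov x (Finset.mem_univ x)
      refine ⟨⟨(j : ℕ), by have := j.2; omega⟩, ?_⟩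
      dsimp only
      rw [dif_pos j.2, Fin.eta]
      exact hj
    · intro j
      split_ifs
      · exact hPlay _
      · exact fun a ha => absurd ha (Finset.notMem_empty _)
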